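/- Let A be a feasible tree solution and F a feasible solution with V[A]=V[F], and let S, S' ∈ 𝔖∖{S_u} with S ≠ S'. Then exactly one of the following holds: (i) S' ⊆ E_{S,0} ∪ E_{S,ℓ(S)} (S' lies in the two outer components along the path of S), or (ii) there exists i ∈ {1,…,ℓ(S)−1} with S' ⊆ E_{S,i}. -/

import Mathlib

open Finset

attribute [local instance] Classical.propDecidable

variable {V : Type*} [Fintype V] [DecidableEq V]

/-- The simple graph on `V` induced by a finite set of (undirected) edges. -/
def graphOf (F : Finset (Sym2 V)) : SimpleGraph V where
  Adj u v := u ≠ v ∧ s(u, v) ∈ F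
  symm := by
    constructor
    intro u v h
    refine ⟨Ne.symm h.1, ?_⟩
    rw [Sym2.eq_swap]
    exact h.2
  loopless := by constructor; intro v h; exact h.1 rfl

/-- The set of vertices incident to at least one edge of `F` (denoted `V[F]` in the paper). -/
def supp (F : Finset (Sym2 V)) : Set V := {v | ∃ e ∈ F, v ∈ e}

/-- A Steiner forest `F` is feasible for the terminal pairs `T` if it connects every pair. -/
def Feasible (F : Finset (Sym2 V)) (T : Finset (V × V)) : Prop :=
  ∀ p ∈ T, (graphOf F).Reachable p.1 p.2

/-- Total edge cost `d(F)`. -/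
def cost (d : Sym2 V → ℝ) (F : Finset (Sym2 V)) : ℝ := ∑ e ∈ F, d e

/-- `A` is a tree (on its vertex support): loopless edges, acyclic, connected on `V[A]`. -/
def IsTreeSol (A : Finset (Sym2 V)) : Prop :=
  (∀ e ∈ A, ¬ e.IsDiag) ∧ (graphOf A).IsAcyclic ∧
    ∀ u ∈ supp A, ∀ v ∈ supp A, (graphOf A).Reachable u v

/-- Shortest-path distance between `u` and `v` in the graph with edge set `Eall`
and edge lengths `d`. -/
noncomputable def wdist (Eall : Finset (Sym2 V)) (d : Sym2 V → ℝ) (u v : V) : ℝ :=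
  ⨅ p : (graphOf Eall).Walk u v, (p.edges.map d).sum

/-- Width of a vertex set `W`: the largest shortest-path distance of a terminal pair
whose two members both lie in `W`. -/
noncomputable def widthSet (Eall : Finset (Sym2 V)) (d : Sym2 V → ℝ) (T : Finset (V × V))
    (W : Set V) : ℝ :=
  sSup {x : ℝ | ∃ p ∈ T, p.1 ∈ W ∧ p.2 ∈ W ∧ x = wdist Eall d p.1 p.2}

/-- Total width `w(F)`: the sum of the widths of the connected components of `F`. -/
noncomputable def totalWidth (Eall : Finset (Sym2 V)) (d : Sym2 V → ℝ) (T : Finset (V × V))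
    (F : Finset (Sym2 V)) : ℝ :=
  ∑ᶠ c : (graphOf F).ConnectedComponent, widthSet Eall d T c.supp

/-- The potential `φ(F) = d(F) + w(F)`. -/
noncomputable def phi (Eall : Finset (Sym2 V)) (d : Sym2 V → ℝ) (T : Finset (V × V))
    (F : Finset (Sym2 V)) : ℝ :=
  cost d F + totalWidth Eall d T F

/-- Some edge of `F` leaves the vertex set `W`. -/
def leavesSet (F : Finset (Sym2 V)) (W : Set V) : Prop :=
  ∃ g ∈ F, ∃ x y : V, g = s(x, y) ∧ x ∈ W ∧ y ∉ W

/-- `T_{e,f}`: the connected component of `A ∖ {e,f}` containing the interior of the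
unique `e`–`f` path of the tree `A`; equivalently, the component containing an endpoint
of `e` together with an endpoint of `f`. -/
def midComp (A : Finset (Sym2 V)) (e f : Sym2 V) : Set V :=
  {v | ∃ x ∈ e, ∃ y ∈ f,
    (graphOf (A \ {e, f})).Reachable x y ∧ (graphOf (A \ {e, f})).Reachable x v}

/-- `e` and `f` are compatible w.r.t. `F` (`e ~cp f`). -/
def Compatible (A F : Finset (Sym2 V)) (e f : Sym2 V) : Prop :=
  e = f ∨ ¬ leavesSet F (midComp A e f)

/-- `e` is safe: some `F`-edge crosses between the two components of `A ∖ {e}`. -/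
def Safe (A F : Finset (Sym2 V)) (e : Sym2 V) : Prop :=
  ∃ g ∈ F, ∃ x y : V, g = s(x, y) ∧ x ≠ y ∧ ¬ (graphOf (A.erase e)).Reachable x y

/-- `e` is essential: removing it from `A` destroys feasibility. -/
def Essential (A : Finset (Sym2 V)) (T : Finset (V × V)) (e : Sym2 V) : Prop :=
  ¬ Feasible (A.erase e) T

/-- The compatibility class of the edge `e` of `A`. -/
noncomputable def cls (A F : Finset (Sym2 V)) (e : Sym2 V) : Finset (Sym2 V) :=
  A.filter (fun f => Compatible A F e f)

/-- `S_u`: the set of unsafe edges of `A`. -/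
noncomputable def unsafeCls (A F : Finset (Sym2 V)) : Finset (Sym2 V) :=
  A.filter (fun e => ¬ Safe A F e)

/-- `𝔖`: the set of compatibility classes of edges of `A`. -/
noncomputable def classes (A F : Finset (Sym2 V)) : Finset (Finset (Sym2 V)) :=
  A.image (cls A F)

/-- `e` lies on the fundamental cycle closed by adding the edge `f` to the tree `A`. -/
def onFundCycle (A : Finset (Sym2 V)) (f e : Sym2 V) : Prop :=
  e ∈ A ∧ ∀ x y : V, f = s(x, y) →
    (graphOf A).Reachable x y ∧ ¬ (graphOf (A.erase e)).Reachable x y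

/-- Edge/edge swap optimality of `A` w.r.t. added edges from `Eadd` and objective `obj`:
no swap that adds an edge `f ∈ Eadd` and removes one edge of the cycle it closes,
keeping feasibility, strictly decreases the objective. -/
def EdgeEdgeSwapOptimal (Eadd : Finset (Sym2 V)) (T : Finset (V × V))
    (obj : Finset (Sym2 V) → ℝ) (A : Finset (Sym2 V)) : Prop :=
  ∀ f ∈ Eadd, ∀ e, onFundCycle A f e →
    Feasible (A.erase e ∪ {f}) T → obj A ≤ obj (A.erase e ∪ {f})

/-- Edge/set swap optimality of `A` w.r.t. added edges from `Eadd` and objective `obj`: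
no swap that adds an edge `f ∈ Eadd` and removes a set `S` of edges of the cycle it closes,
keeping feasibility, strictly decreases the objective. -/
def EdgeSetSwapOptimal (Eadd : Finset (Sym2 V)) (T : Finset (V × V))
    (obj : Finset (Sym2 V) → ℝ) (A : Finset (Sym2 V)) : Prop :=
  ∀ f ∈ Eadd, ∀ S ⊆ A, (∀ e ∈ S, onFundCycle A f e) →
    Feasible ((A \ S) ∪ {f}) T → obj A ≤ obj ((A \ S) ∪ {f})

/-- Removing swap optimality: deleting any (feasibility preserving) edge set from `A`
does not strictly decrease the objective. -/
def RemovingSwapOptimal (T : Finset (V × V))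
    (obj : Finset (Sym2 V) → ℝ) (A : Finset (Sym2 V)) : Prop :=
  ∀ S ⊆ A, Feasible (A \ S) T → obj A ≤ obj (A \ S)

/-- Path/set swap optimality of `A`: for vertices `u, v` in the same component of `A`,
adding a set `P ⊆ Eadd` of edges (along a `u`–`v` connection) and removing a set `S` of
edges of the component of `u`, in a way that keeps `u,v` connected and the solution
feasible, does not strictly decrease the objective. -/
def PathSetSwapOptimal (Eadd : Finset (Sym2 V)) (T : Finset (V × V))
    (obj : Finset (Sym2 V) → ℝ) (A : Finset (Sym2 V)) : Prop :=
  ∀ u v : V, (graphOf A).Reachable u v →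
    ∀ P : Finset (Sym2 V), P ⊆ Eadd → ∀ S ⊆ A,
      (∀ e ∈ S, ∃ x ∈ e, (graphOf A).Reachable u x) →
      (graphOf ((A \ S) ∪ P)).Reachable u v →
      Feasible ((A \ S) ∪ P) T → obj A ≤ obj ((A \ S) ∪ P)

/-- A connected component `c` of `A ∖ S` is an *inner* component for the class `S`
if it touches (at least) two distinct edges of `S`. -/
def innerComp (A S : Finset (Sym2 V)) (c : (graphOf (A \ S)).ConnectedComponent) : Prop :=
  ∃ e ∈ S, ∃ e' ∈ S, e ≠ e' ∧ (∃ x ∈ e, (graphOf (A \ S)).connectedComponentMk x = c) ∧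
    ∃ y ∈ e', (graphOf (A \ S)).connectedComponentMk y = c

/-- The sum of the widths of the inner components `E_{S,i}`, `i ∈ In_S`, of the class `S`. -/
noncomputable def innerWidthSum (Eall : Finset (Sym2 V)) (d : Sym2 V → ℝ) (T : Finset (V × V))
    (A S : Finset (Sym2 V)) : ℝ :=
  ∑ᶠ c : (graphOf (A \ S)).ConnectedComponent,
    if innerComp A S c then widthSet Eall d T c.supp else 0

/-- `index(E')` for a vertex set `W`: the largest index `i` (in the enumeration `tp` of the
terminal pairs by nondecreasing distance) of a terminal pair lying entirely inside `W`. -/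
noncomputable def idxOf {nt : ℕ} (tp : Fin nt → V × V) (W : Set V) : ℕ :=
  sSup {i : ℕ | ∃ h : i < nt, (tp ⟨i, h⟩).1 ∈ W ∧ (tp ⟨i, h⟩).2 ∈ W}

/-- The finite vertex support of an edge set. -/
def suppF (B : Finset (Sym2 V)) : Finset V :=
  Finset.univ.filter (fun v => ∃ e ∈ B, v ∈ e)

/-- `e` crosses between two different connected components of `A`. -/
def crossingEdge (A : Finset (Sym2 V)) (e : Sym2 V) : Prop :=
  ∀ x y : V, e = s(x, y) → ¬ (graphOf A).Reachable x y

/-- The components of `A` touched by the edge set `B`, i.e. the nodes of `G_A`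
incident to `B`. -/
noncomputable def touched (A B : Finset (Sym2 V)) :
    Finset ((graphOf A).ConnectedComponent) :=
  (suppF B).image ((graphOf A).connectedComponentMk)

/-- `B` is (the edge set of) a tree in the contracted multigraph `G_A`: all its edges cross
between components of `A`, it is connected (through the components of `A` it touches), and
it has one edge less than the number of components it touches. -/
def IsGATree (A B : Finset (Sym2 V)) : Prop :=
  (∀ e ∈ B, crossingEdge A e) ∧ (touched A B).card = B.card + 1 ∧
    ∀ x ∈ suppF B, ∀ y ∈ suppF B, (graphOf (A ∪ B)).Reachable x y

/-- `A` is `c`-approximate connecting move optimal: for every tree `B` in `G_A` (with edges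
taken from `Emoves`), the total width of the components it connects, minus the largest of
these widths, is at most `c` times the length of the tree. -/
def ConnApproxOptimal (Emoves Eall : Finset (Sym2 V)) (d : Sym2 V → ℝ) (T : Finset (V × V))
    (c : ℝ) (A : Finset (Sym2 V)) : Prop :=
  ∀ B ⊆ Emoves, IsGATree A B →
    (∑ t ∈ touched A B, widthSet Eall d T t.supp)
      - (⨆ t ∈ touched A B, widthSet Eall d T t.supp) ≤ c * ∑ e ∈ B, d e


/-! ### Infrastructure -/

section Infra

variable {A F : Finset (Sym2 V)}

open SimpleGraph

set_option linter.unusedSectionVars false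
set_option linter.unusedVariables false

lemma graphOf_mono {X Y : Finset (Sym2 V)} (h : X ⊆ Y) : graphOf X ≤ graphOf Y := by
  intro u v hadj
  exact ⟨hadj.1, h hadj.2⟩

lemma reach_mono {X Y : Finset (Sym2 V)} (h : X ⊆ Y) {u v : V}
    (hr : (graphOf X).Reachable u v) : (graphOf Y).Reachable u v :=
  hr.mono (graphOf_mono h)

lemma reach_of_edge {X : Finset (Sym2 V)} {u v : V} (h : s(u,v) ∈ X) (hne : u ≠ v) :
    (graphOf X).Reachable u v :=
  SimpleGraph.Adj.reachable ⟨hne, h⟩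

lemma erase_subset' {X : Finset (Sym2 V)} {e : Sym2 V} : X.erase e ⊆ X :=
  Finset.erase_subset e X

lemma sdiff_pair (X : Finset (Sym2 V)) (e f : Sym2 V) :
    X \ {e, f} = (X.erase e).erase f := by
  ext x
  simp only [Finset.mem_sdiff, Finset.mem_insert, Finset.mem_singleton, Finset.mem_erase]
  tauto

lemma sdiff_pair_subset_left (X : Finset (Sym2 V)) (e f : Sym2 V) :
    X \ {e, f} ⊆ X.erase e := by
  rw [sdiff_pair]; exact Finset.erase_subset _ _

lemma sdiff_pair_subset_right (X : Finset (Sym2 V)) (e f : Sym2 V) :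
    X \ {e, f} ⊆ X.erase f := by
  intro x hx
  rw [Finset.mem_sdiff] at hx
  rw [Finset.mem_erase]
  refine ⟨?_, hx.1⟩
  intro h; exact hx.2 (by simp [h])

lemma sdiff_subset_erase {X S : Finset (Sym2 V)} {e : Sym2 V} (he : e ∈ S) :
    X \ S ⊆ X.erase e := by
  intro x hx
  rw [Finset.mem_sdiff] at hx
  exact Finset.mem_erase.mpr ⟨fun h => hx.2 (h ▸ he), hx.1⟩

/-- In a tree, removing an edge disconnects its endpoints. -/
lemma tree_sep (hT : IsTreeSol A) {a b : V} (he : s(a,b) ∈ A) (hab : a ≠ b) :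
    ¬ (graphOf (A.erase s(a,b))).Reachable a b := by
  intro hr
  have hadj : (graphOf A).Adj a b := ⟨hab, he⟩
  have hb := (isAcyclic_iff_forall_adj_isBridge.mp hT.2.1) hadj
  rw [isBridge_iff] at hb
  refine hb (hr.mono ?_)
  intro u v huv
  have hm := Finset.mem_erase.mp huv.2
  simp only [SimpleGraph.deleteEdges_adj, Set.mem_singleton_iff]
  exact ⟨⟨huv.1, hm.2⟩, hm.1⟩

/-- Splitting a walk at an edge. -/
lemma walk_split {X : Finset (Sym2 V)} {a b : V} {u v : V}
    (w : (graphOf X).Walk u v) :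
    (graphOf (X.erase s(a,b))).Reachable u v ∨
      (((graphOf (X.erase s(a,b))).Reachable u a ∨ (graphOf (X.erase s(a,b))).Reachable u b) ∧
       ((graphOf (X.erase s(a,b))).Reachable v a ∨ (graphOf (X.erase s(a,b))).Reachable v b)) := by
  induction w with
  | nil => exact Or.inl (Reachable.refl _)
  | @cons u w v h p ih =>
    by_cases hc : s(u,w) = s(a,b)
    · rw [Sym2.eq_iff] at hc
      have hu : (graphOf (X.erase s(a,b))).Reachable u a ∨
          (graphOf (X.erase s(a,b))).Reachable u b := by
        rcases hc with ⟨h1, _⟩ | ⟨h1, _⟩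
        · exact Or.inl (h1 ▸ Reachable.refl _)
        · exact Or.inr (h1 ▸ Reachable.refl _)
      have hwab : (graphOf (X.erase s(a,b))).Reachable w a ∨
          (graphOf (X.erase s(a,b))).Reachable w b := by
        rcases hc with ⟨_, h2⟩ | ⟨_, h2⟩
        · exact Or.inr (h2 ▸ Reachable.refl _)
        · exact Or.inl (h2 ▸ Reachable.refl _)
      refine Or.inr ⟨hu, ?_⟩
      rcases ih with hr | ⟨_, hv⟩
      · rcases hwab with h1 | h1
        · exact Or.inl (hr.symm.trans h1)
        · exact Or.inr (hr.symm.trans h1)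
      · exact hv
    · have hadj : (graphOf (X.erase s(a,b))).Adj u w :=
        ⟨h.1, Finset.mem_erase.mpr ⟨hc, h.2⟩⟩
      rcases ih with hr | ⟨hw', hv⟩
      · exact Or.inl (hadj.reachable.trans hr)
      · refine Or.inr ⟨?_, hv⟩
        rcases hw' with h1 | h1
        · exact Or.inl (hadj.reachable.trans h1)
        · exact Or.inr (hadj.reachable.trans h1)

lemma reach_split {X : Finset (Sym2 V)} {a b u v : V}
    (h : (graphOf X).Reachable u v) :
    (graphOf (X.erase s(a,b))).Reachable u v ∨
      (((graphOf (X.erase s(a,b))).Reachable u a ∨ (graphOf (X.erase s(a,b))).Reachable u b) ∧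
       ((graphOf (X.erase s(a,b))).Reachable v a ∨ (graphOf (X.erase s(a,b))).Reachable v b)) := by
  obtain ⟨w⟩ := h
  exact walk_split w

/-- Side dichotomy in a tree. -/
lemma side_dich (hT : IsTreeSol A) {a b u : V} (he : s(a,b) ∈ A)
    (hr : (graphOf A).Reachable u a) :
    (graphOf (A.erase s(a,b))).Reachable u a ∨ (graphOf (A.erase s(a,b))).Reachable u b := by
  rcases reach_split (a := a) (b := b) hr with h | ⟨h, _⟩
  · exact Or.inl h
  · exact h

lemma not_both_sides (hT : IsTreeSol A) {a b u : V} (he : s(a,b) ∈ A) (hab : a ≠ b)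
    (h1 : (graphOf (A.erase s(a,b))).Reachable u a)
    (h2 : (graphOf (A.erase s(a,b))).Reachable u b) : False :=
  tree_sep hT he hab (h1.symm.trans h2)

lemma mem_supp_of_edge {X : Finset (Sym2 V)} {e : Sym2 V} {x : V} (he : e ∈ X) (hx : x ∈ e) :
    x ∈ supp X := ⟨e, he, hx⟩

lemma edge_nondiag (hT : IsTreeSol A) {a b : V} (he : s(a,b) ∈ A) : a ≠ b := by
  intro h
  exact hT.1 _ he (by simp [h])

lemma supp_reach (hT : IsTreeSol A) {u v : V} (hu : u ∈ supp A) (hv : v ∈ supp A) :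
    (graphOf A).Reachable u v := hT.2.2 u hu v hv

end Infra

/-! ### midComp machinery -/

section Mid

open SimpleGraph

set_option linter.unusedSectionVars false
set_option linter.unusedVariables false

variable {A F : Finset (Sym2 V)}

lemma sym2_eq (e : Sym2 V) : ∃ a b : V, e = s(a,b) :=
  Sym2.ind (fun a b => ⟨a, b, rfl⟩) e

lemma mem_mid {e f : Sym2 V} {x y v : V} (hx : x ∈ e) (hy : y ∈ f)
    (hxy : (graphOf (A \ {e,f})).Reachable x y)
    (hxv : (graphOf (A \ {e,f})).Reachable x v) : v ∈ midComp A e f :=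
  ⟨x, hx, y, hy, hxy, hxv⟩

lemma mid_comm (e f : Sym2 V) : midComp A f e = midComp A e f := by
  have hpair : ({f, e} : Finset (Sym2 V)) = {e, f} := Finset.pair_comm f e
  ext v
  constructor
  · rintro ⟨x, hx, y, hy, hxy, hxv⟩
    rw [hpair] at hxy hxv
    exact ⟨y, hy, x, hx, hxy.symm, hxy.symm.trans hxv⟩
  · rintro ⟨x, hx, y, hy, hxy, hxv⟩
    refine ⟨y, hy, x, hx, ?_, ?_⟩ <;> rw [hpair]
    · exact hxy.symm
    · exact hxy.symm.trans hxv

lemma compat_symm {e f : Sym2 V} (h : Compatible A F e f) : Compatible A F f e := by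
  rcases h with h | h
  · exact Or.inl h.symm
  · right
    rw [mid_comm]
    exact h

lemma mem_cls_iff {e f : Sym2 V} : f ∈ cls A F e ↔ f ∈ A ∧ Compatible A F e f :=
  Finset.mem_filter

lemma self_mem_cls {e : Sym2 V} (he : e ∈ A) : e ∈ cls A F e :=
  Finset.mem_filter.mpr ⟨he, Or.inl rfl⟩

lemma no_leave_of_compat {e f : Sym2 V} (h : Compatible A F e f) (hef : e ≠ f)
    {p q : V} (hp : p ∈ midComp A e f) (hq : q ∉ midComp A e f)
    (hpq : s(p,q) ∈ F) : False := by
  rcases h with h | h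
  · exact hef h
  · exact h ⟨s(p,q), hpq, p, q, rfl, hp, hq⟩

/-- Orientation core: if `b` (endpoint of `e`) reaches `c` (endpoint of `f`) avoiding both
edges, then the mid component is exactly the component of `b`. -/
lemma mid_orient_core (hT : IsTreeSol A) {a b c d : V}
    (he : s(a,b) ∈ A) (hf : s(c,d) ∈ A) (hef : (s(a,b) : Sym2 V) ≠ s(c,d))
    (hbc : (graphOf (A \ {s(a,b), s(c,d)})).Reachable b c) :
    ∀ v, v ∈ midComp A s(a,b) s(c,d) ↔
      (graphOf (A \ {s(a,b), s(c,d)})).Reachable b v := by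
  have hab : a ≠ b := edge_nondiag hT he
  have hcd : c ≠ d := edge_nondiag hT hf
  intro v
  constructor
  · rintro ⟨x, hx, y, hy, hxy, hxv⟩
    rw [Sym2.mem_iff] at hx hy
    rcases hx with hxa | hxb
    · -- x = a : impossible
      exfalso
      have hxy' := hxa ▸ hxy
      rcases hy with hyc | hyd
      · -- y = c : a reaches c avoiding both, so a ~ b in A.erase e
        have hac : (graphOf (A \ {s(a,b), s(c,d)})).Reachable a c := hyc ▸ hxy'
        have h1 : (graphOf (A.erase s(a,b))).Reachable a b :=
          reach_mono (sdiff_pair_subset_left A _ _) (hac.trans hbc.symm)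
        exact tree_sep hT he hab h1
      · -- y = d : then c ~ d in A.erase f
        have had : (graphOf (A \ {s(a,b), s(c,d)})).Reachable a d := hyd ▸ hxy'
        have h1 : (graphOf (A.erase s(c,d))).Reachable a d :=
          reach_mono (sdiff_pair_subset_right A _ _) had
        have h2 : (graphOf (A.erase s(c,d))).Reachable b c :=
          reach_mono (sdiff_pair_subset_right A _ _) hbc
        have h3 : (graphOf (A.erase s(c,d))).Reachable a b :=
          reach_of_edge (Finset.mem_erase.mpr ⟨hef, he⟩) hab
        exact tree_sep hT hf hcd (h2.symm.trans (h3.symm.trans h1))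
    · exact hxb ▸ hxv
  · intro h
    exact mem_mid (by simp) (by simp) hbc h

/-- Existence of an orientation for a pair of distinct tree edges. -/
lemma mid_orient (hT : IsTreeSol A) {e f : Sym2 V} (he : e ∈ A) (hf : f ∈ A) (hef : e ≠ f) :
    ∃ a b c d : V, e = s(a,b) ∧ f = s(c,d) ∧
      (graphOf (A \ {e,f})).Reachable b c ∧
      ∀ v, v ∈ midComp A e f ↔ (graphOf (A \ {e,f})).Reachable b v := by
  obtain ⟨a, b, rfl⟩ := sym2_eq e
  obtain ⟨c, d, rfl⟩ := sym2_eq f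
  have hca : (graphOf A).Reachable c a :=
    supp_reach hT (mem_supp_of_edge hf (by simp)) (mem_supp_of_edge he (by simp))
  have hstep : ∃ a' b', (s(a,b) : Sym2 V) = s(a',b') ∧
      (graphOf (A.erase s(a,b))).Reachable c b' := by
    rcases side_dich hT he hca with h | h
    · exact ⟨b, a, Sym2.eq_swap, h⟩
    · exact ⟨a, b, rfl, h⟩
  obtain ⟨a', b', heq, hcb⟩ := hstep
  rw [heq] at he hef hcb ⊢
  have hsplit := reach_split (a := c) (b := d) hcb
  rw [← sdiff_pair A s(a',b') s(c,d)] at hsplit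
  have main : ∀ hbc : (graphOf (A \ {s(a',b'), s(c,d)})).Reachable b' c,
      ∃ a b c' d' : V, (s(a',b') : Sym2 V) = s(a,b) ∧ (s(c,d) : Sym2 V) = s(c',d') ∧
      (graphOf (A \ {s(a',b'), s(c,d)})).Reachable b c' ∧
      ∀ v, v ∈ midComp A s(a',b') s(c,d) ↔
        (graphOf (A \ {s(a',b'), s(c,d)})).Reachable b v := by
    intro hbc
    exact ⟨a', b', c, d, rfl, rfl, hbc, mid_orient_core hT he hf hef hbc⟩
  rcases hsplit with h | ⟨_, h⟩
  · exact main h.symm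
  · rcases h with h | h
    · exact main h
    · -- b' reaches d : swap c,d
      have hswap : (s(c,d) : Sym2 V) = s(d,c) := Sym2.eq_swap
      rw [hswap] at hf hef h ⊢
      exact ⟨a', b', d, c, rfl, rfl, h,
        mid_orient_core hT he hf hef h⟩

end Mid

/-! ### Crossing transfer (L1*) -/

section Cross

open SimpleGraph

set_option linter.unusedSectionVars false
set_option linter.unusedVariables false

variable {A F : Finset (Sym2 V)}

lemma erase_erase_pair (X : Finset (Sym2 V)) (e f : Sym2 V) :
    (X.erase f).erase e = X \ {e, f} := by
  rw [show ({e, f} : Finset (Sym2 V)) = {f, e} from Finset.pair_comm e f, sdiff_pair]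

lemma supp_of_F_edge (hsupp : supp A = supp F) {p q : V} (hpF : s(p,q) ∈ F) :
    p ∈ supp A ∧ q ∈ supp A := by
  constructor
  · rw [hsupp]; exact ⟨s(p,q), hpF, by simp⟩
  · rw [hsupp]; exact ⟨s(p,q), hpF, by simp⟩

/-- If `e ~cp f` and an `F`-edge crosses the cut of `e`, then it crosses the cut of `f`
and avoids the middle component. -/
lemma cross_transfer (hT : IsTreeSol A) {e f : Sym2 V} (he : e ∈ A) (hf : f ∈ A)
    (hef : e ≠ f) (hc : Compatible A F e f) {p q : V}
    (hpF : s(p,q) ∈ F) (hps : p ∈ supp A) (hqs : q ∈ supp A)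
    (hsep : ¬ (graphOf (A.erase e)).Reachable p q) :
    ¬ (graphOf (A.erase f)).Reachable p q ∧ p ∉ midComp A e f ∧ q ∉ midComp A e f := by
  obtain ⟨a, b, c, d, heq, hfq, hbc, hiff⟩ := mid_orient hT he hf hef
  have hab : a ≠ b := edge_nondiag hT (heq ▸ he)
  have hcd : c ≠ d := edge_nondiag hT (hfq ▸ hf)
  have has : a ∈ supp A := mem_supp_of_edge he (heq ▸ (by simp))
  -- core, for the orientation `p` on the `a` side, `q` on the `b` side
  have core : ∀ p q : V, s(p,q) ∈ F →
      ¬ (graphOf (A.erase e)).Reachable p q →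
      (graphOf (A.erase e)).Reachable p a →
      (graphOf (A.erase e)).Reachable q b →
      ¬ (graphOf (A.erase f)).Reachable p q ∧ p ∉ midComp A e f ∧ q ∉ midComp A e f := by
    intro p q hpF hsep hpa hqb
    have hpmid : p ∉ midComp A e f := by
      intro hp
      have hpb : (graphOf (A.erase e)).Reachable p b :=
        reach_mono (sdiff_pair_subset_left A e f) ((hiff p).mp hp).symm
      exact not_both_sides hT (heq ▸ he) hab (heq ▸ hpa) (heq ▸ hpb)
    have hsplit := reach_split (a := c) (b := d) hqb
    rw [heq] at hsplit
    rw [← sdiff_pair A s(a,b) s(c,d), ← heq, ← hfq] at hsplit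
    have hqmid_of : (graphOf (A \ {e, f})).Reachable q b → False := by
      intro hq
      have : q ∈ midComp A e f := (hiff q).mpr hq.symm
      exact no_leave_of_compat hc hef this hpmid (by rwa [Sym2.eq_swap])
    have hqd : (graphOf (A \ {e, f})).Reachable q d := by
      rcases hsplit with h | ⟨h, _⟩
      · exact absurd h hqmid_of
      · rcases h with h | h
        · exact absurd (h.trans hbc.symm) hqmid_of
        · exact h
    have hqmid : q ∉ midComp A e f := by
      intro hq
      have hqb' : (graphOf (A \ {e, f})).Reachable b q := (hiff q).mp hq
      have hbd : (graphOf (A.erase f)).Reachable b d :=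
        reach_mono (sdiff_pair_subset_right A e f) (hqb'.trans hqd)
      have hcb : (graphOf (A.erase f)).Reachable c b :=
        reach_mono (sdiff_pair_subset_right A e f) hbc.symm
      exact tree_sep hT (hfq ▸ hf) hcd (hfq ▸ (hcb.trans hbd))
    refine ⟨?_, hpmid, hqmid⟩
    intro hrf
    have hsplit2 := reach_split (a := a) (b := b) hrf
    rw [hfq] at hsplit2
    rw [erase_erase_pair A s(a,b) s(c,d), ← heq, ← hfq] at hsplit2
    rcases hsplit2 with h2 | ⟨_, h2⟩
    · exact hsep (reach_mono (sdiff_pair_subset_left A e f) h2)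
    · rcases h2 with h2 | h2
      · -- q reaches a avoiding both
        have : (graphOf (A.erase e)).Reachable q a :=
          reach_mono (sdiff_pair_subset_left A e f) h2
        exact not_both_sides hT (heq ▸ he) hab (heq ▸ this) (heq ▸ hqb)
      · exact hqmid_of h2
  -- orient p and q
  have hpa' := side_dich hT (heq ▸ he) (supp_reach hT hps has)
  have hqa' := side_dich hT (heq ▸ he) (supp_reach hT hqs has)
  rw [← heq] at hpa' hqa'
  rcases hpa' with hp | hp <;> rcases hqa' with hq | hq
  · exact absurd (hp.trans hq.symm) hsep
  · exact core p q hpF hsep hp hq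
  · have hres := core q p (by rwa [Sym2.eq_swap]) (fun h => hsep h.symm) hq hp
    exact ⟨fun h => hres.1 h.symm, hres.2.2, hres.2.1⟩
  · exact absurd (hp.trans hq.symm) hsep

end Cross

/-! ### Safety and classes -/

section Safety

open SimpleGraph

set_option linter.unusedSectionVars false
set_option linter.unusedVariables false

variable {A F : Finset (Sym2 V)}

/-- Two distinct unsafe edges are compatible. -/
lemma unsafe_compat (hT : IsTreeSol A) (hsupp : supp A = supp F)
    {e f : Sym2 V} (he : e ∈ A) (hf : f ∈ A) (hef : e ≠ f)
    (hue : ¬ Safe A F e) (huf : ¬ Safe A F f) : Compatible A F e f := by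
  right
  rintro ⟨g, hg, x, y, hgeq, hxT, hyT⟩
  subst hgeq
  have hxy : x ≠ y := fun h => hyT (h ▸ hxT)
  obtain ⟨hxs, hys⟩ := supp_of_F_edge hsupp hg
  obtain ⟨a, b, c, d, heq, hfq, hbc, hiff⟩ := mid_orient hT he hf hef
  have hcd : c ≠ d := edge_nondiag hT (hfq ▸ hf)
  by_cases hse : (graphOf (A.erase e)).Reachable x y
  · by_cases hsf : (graphOf (A.erase f)).Reachable x y
    · -- derive contradiction
      have hbx : (graphOf (A \ {e, f})).Reachable b x := (hiff x).mp hxT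
      have h1 := reach_split (a := c) (b := d) hse
      rw [heq] at h1
      rw [← sdiff_pair A s(a,b) s(c,d), ← heq, ← hfq] at h1
      have h2 := reach_split (a := a) (b := b) hsf
      rw [hfq] at h2
      rw [erase_erase_pair A s(a,b) s(c,d), ← heq, ← hfq] at h2
      have hyd : (graphOf (A \ {e, f})).Reachable y d := by
        rcases h1 with h1 | ⟨_, h1⟩
        · exact absurd (hbx.trans h1) (fun hh => hyT ((hiff y).mpr hh))
        · rcases h1 with h1 | h1
          · exact absurd (hbc.trans h1.symm) (fun hh => hyT ((hiff y).mpr hh))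
          · exact h1
      have hya : (graphOf (A \ {e, f})).Reachable y a := by
        rcases h2 with h2 | ⟨_, h2⟩
        · exact absurd (hbx.trans h2) (fun hh => hyT ((hiff y).mpr hh))
        · rcases h2 with h2 | h2
          · exact h2
          · exact absurd h2 (fun hh => hyT ((hiff y).mpr hh.symm))
      have hab : a ≠ b := edge_nondiag hT (heq ▸ he)
      have h3 : (graphOf (A.erase e)).Reachable a d :=
        reach_mono (sdiff_pair_subset_left A e f) (hya.symm.trans hyd)
      have hdc : s(d,c) ∈ A.erase e := by
        rw [Sym2.eq_swap, ← hfq]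
        exact Finset.mem_erase.mpr ⟨Ne.symm hef, hf⟩
      have h4 : (graphOf (A.erase e)).Reachable d c := reach_of_edge hdc (Ne.symm hcd)
      have h5 : (graphOf (A.erase e)).Reachable c b :=
        reach_mono (sdiff_pair_subset_left A e f) hbc.symm
      exact tree_sep hT (heq ▸ he) hab (heq ▸ (h3.trans (h4.trans h5)))
    · exact huf ⟨s(x,y), hg, x, y, rfl, hxy, hsf⟩
  · exact hue ⟨s(x,y), hg, x, y, rfl, hxy, hse⟩

/-- An unsafe edge is incompatible with any distinct safe edge. -/
lemma unsafe_safe_incompat (hT : IsTreeSol A) (hsupp : supp A = supp F)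
    {e f : Sym2 V} (he : e ∈ A) (hf : f ∈ A) (hef : e ≠ f)
    (hue : ¬ Safe A F e) (hsf : Safe A F f) : ¬ Compatible A F e f := by
  intro hc
  obtain ⟨g, hg, r, t, hgeq, hrt, hsepf⟩ := hsf
  subst hgeq
  obtain ⟨hrs, hts⟩ := supp_of_F_edge hsupp hg
  obtain ⟨a, b, c, d, heq, hfq, hbc, hiff⟩ := mid_orient hT he hf hef
  have hcd : c ≠ d := edge_nondiag hT (hfq ▸ hf)
  have hre : (graphOf (A.erase e)).Reachable r t := by
    by_contra hcon
    exact hue ⟨s(r,t), hg, r, t, rfl, hrt, hcon⟩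
  rw [hfq] at hsepf
  have h1 := reach_split (a := c) (b := d) hre
  rw [heq] at h1
  rw [← sdiff_pair A s(a,b) s(c,d), ← heq, ← hfq] at h1
  have hDf : ∀ u v : V, (graphOf (A \ {e, f})).Reachable u v →
      (graphOf (A.erase s(c,d))).Reachable u v := by
    intro u v hh
    have := reach_mono (sdiff_pair_subset_right A e f) hh
    rwa [hfq] at this
  rcases h1 with h1 | ⟨h1, h2⟩
  · exact hsepf (hDf _ _ h1)
  · rcases h1 with h1 | h1 <;> rcases h2 with h2 | h2
    · exact hsepf (hDf _ _ (h1.trans h2.symm))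
    · -- r on c side, t on d side : r in mid, t not
      have hrmid : r ∈ midComp A e f := (hiff r).mpr (hbc.trans h1.symm)
      have htmid : t ∉ midComp A e f := by
        intro ht
        have : (graphOf (A \ {e, f})).Reachable b t := (hiff t).mp ht
        exact tree_sep hT (hfq ▸ hf) hcd (hDf _ _ (hbc.symm.trans (this.trans h2)))
      exact no_leave_of_compat hc hef hrmid htmid hg
    · -- r on d side, t on c side
      have htmid : t ∈ midComp A e f := (hiff t).mpr (hbc.trans h2.symm)
      have hrmid : r ∉ midComp A e f := by
        intro hr
        have : (graphOf (A \ {e, f})).Reachable b r := (hiff r).mp hr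
        exact tree_sep hT (hfq ▸ hf) hcd (hDf _ _ (hbc.symm.trans (this.trans h1)))
      exact no_leave_of_compat hc hef htmid hrmid (by rwa [Sym2.eq_swap])
    · exact hsepf (hDf _ _ (h1.trans h2.symm))

lemma cls_eq_unsafeCls (hT : IsTreeSol A) (hsupp : supp A = supp F)
    {e : Sym2 V} (he : e ∈ A) (hue : ¬ Safe A F e) : cls A F e = unsafeCls A F := by
  ext f
  rw [mem_cls_iff, unsafeCls, Finset.mem_filter]
  constructor
  · rintro ⟨hf, hc⟩
    refine ⟨hf, ?_⟩
    intro hsf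
    by_cases hef : e = f
    · exact hue (hef ▸ hsf)
    · exact unsafe_safe_incompat hT hsupp he hf hef hue hsf hc
  · rintro ⟨hf, huf⟩
    refine ⟨hf, ?_⟩
    by_cases hef : e = f
    · exact Or.inl hef
    · exact unsafe_compat hT hsupp he hf hef hue huf

lemma safe_of_cls_ne (hT : IsTreeSol A) (hsupp : supp A = supp F)
    {e : Sym2 V} (he : e ∈ A) (hne : cls A F e ≠ unsafeCls A F) : Safe A F e := by
  by_contra hu
  exact hne (cls_eq_unsafeCls hT hsupp he hu)

lemma safe_of_mem_cls (hT : IsTreeSol A) (hsupp : supp A = supp F)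
    {e₀ h : Sym2 V} (he₀ : e₀ ∈ A) (hsafe₀ : Safe A F e₀)
    (hh : h ∈ cls A F e₀) : Safe A F h := by
  by_contra hu
  by_cases hne : h = e₀
  · exact hu (hne ▸ hsafe₀)
  · exact unsafe_safe_incompat hT hsupp ((mem_cls_iff.mp hh).1) he₀ hne hu hsafe₀
      (compat_symm (mem_cls_iff.mp hh).2)

/-- Crossing the cut of a class member implies crossing the cut of any other member. -/
lemma cross_all (hT : IsTreeSol A) (hsupp : supp A = supp F)
    {e₀ : Sym2 V} (he₀ : e₀ ∈ A) {h k : Sym2 V}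
    (hh : h ∈ cls A F e₀) (hk : k ∈ cls A F e₀) {p q : V} (hpF : s(p,q) ∈ F)
    (hsep : ¬ (graphOf (A.erase h)).Reachable p q) :
    ¬ (graphOf (A.erase k)).Reachable p q := by
  obtain ⟨hps, hqs⟩ := supp_of_F_edge hsupp hpF
  have hsep0 : ¬ (graphOf (A.erase e₀)).Reachable p q := by
    by_cases hne : h = e₀
    · exact hne ▸ hsep
    · exact (cross_transfer hT ((mem_cls_iff.mp hh).1) he₀ hne
        (compat_symm (mem_cls_iff.mp hh).2) hpF hps hqs hsep).1
  by_cases hne : k = e₀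
  · exact hne ▸ hsep0
  · exact (cross_transfer hT he₀ ((mem_cls_iff.mp hk).1) (Ne.symm hne)
      ((mem_cls_iff.mp hk).2) hpF hps hqs hsep0).1

/-- Mid-component avoidance for crossing edges. -/
lemma cross_mid (hT : IsTreeSol A) (hsupp : supp A = supp F)
    {e₀ : Sym2 V} (he₀ : e₀ ∈ A) {h k : Sym2 V}
    (hh : h ∈ cls A F e₀) (hk : k ∈ cls A F e₀) (hkne : k ≠ e₀) {p q : V}
    (hpF : s(p,q) ∈ F)
    (hsep : ¬ (graphOf (A.erase h)).Reachable p q) :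
    p ∉ midComp A e₀ k ∧ q ∉ midComp A e₀ k := by
  obtain ⟨hps, hqs⟩ := supp_of_F_edge hsupp hpF
  have hsep0 : ¬ (graphOf (A.erase e₀)).Reachable p q := by
    by_cases hne : h = e₀
    · exact hne ▸ hsep
    · exact (cross_transfer hT ((mem_cls_iff.mp hh).1) he₀ hne
        (compat_symm (mem_cls_iff.mp hh).2) hpF hps hqs hsep).1
  have := cross_transfer hT he₀ ((mem_cls_iff.mp hk).1) (Ne.symm hkne)
      ((mem_cls_iff.mp hk).2) hpF hps hqs hsep0
  exact ⟨this.2.1, this.2.2⟩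

end Safety

/-! ### First separating edge -/

section Sep

open SimpleGraph

set_option linter.unusedSectionVars false
set_option linter.unusedVariables false

variable {A F : Finset (Sym2 V)}

lemma first_sep_aux (hT : IsTreeSol A) {S : Finset (Sym2 V)} :
    ∀ {x r : V} (w : (graphOf A).Walk x r), w.IsPath →
      ¬ (graphOf (A \ S)).Reachable x r →
      ∃ h ∈ S, ∃ u u₂ : V, h = s(u,u₂) ∧ (graphOf (A \ S)).Reachable x u ∧
        ¬ (graphOf (A.erase h)).Reachable x r := by
  intro x r w
  induction w with
  | nil => exact fun _ hnr => absurd (Reachable.refl _) hnr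
  | @cons x z r hadj w ih =>
    intro hpath hnr
    by_cases hmem : s(x,z) ∈ S
    · refine ⟨s(x,z), hmem, x, z, rfl, Reachable.refl _, ?_⟩
      intro hre
      have hwedge : s(x,z) ∉ w.edges := by
        intro hmem'
        exact ((SimpleGraph.Walk.cons_isPath_iff _ _).mp hpath).2
          (SimpleGraph.Walk.fst_mem_support_of_mem_edges w hmem')
      have hreach : (graphOf (A.erase s(x,z))).Reachable z r := by
        refine ⟨w.transfer (graphOf (A.erase s(x,z))) ?_⟩
        intro e he'
        induction e using Sym2.ind with
        | _ u v =>
          have hA : (graphOf A).Adj u v := (graphOf A).mem_edgeSet.mp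
            (SimpleGraph.Walk.edges_subset_edgeSet w he')
          rw [SimpleGraph.mem_edgeSet]
          refine ⟨hA.1, Finset.mem_erase.mpr ⟨?_, hA.2⟩⟩
          intro hh
          exact hwedge (hh ▸ he')
      exact tree_sep hT hadj.2 hadj.1 (hre.trans hreach.symm)
    · have hxz' : s(x,z) ∈ A \ S := Finset.mem_sdiff.mpr ⟨hadj.2, hmem⟩
      have hxzR : (graphOf (A \ S)).Reachable x z := reach_of_edge hxz' hadj.1
      have hnzr : ¬ (graphOf (A \ S)).Reachable z r := fun h => hnr (hxzR.trans h)
      obtain ⟨h, hhS, u, u₂, heq, hru, hsep⟩ :=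
        ih ((SimpleGraph.Walk.cons_isPath_iff _ _).mp hpath).1 hnzr
      refine ⟨h, hhS, u, u₂, heq, hxzR.trans hru, ?_⟩
      intro hre
      have hxzE : s(x,z) ∈ A.erase h :=
        Finset.mem_erase.mpr ⟨fun hh => hmem (hh ▸ hhS), hadj.2⟩
      exact hsep ((reach_of_edge hxzE hadj.1).symm.trans hre)

/-- SEP': first edge of `S` separating `x` from `r` along the tree path. -/
lemma first_sep (hT : IsTreeSol A) {S : Finset (Sym2 V)} {x r : V}
    (hr : (graphOf A).Reachable x r)
    (hnr : ¬ (graphOf (A \ S)).Reachable x r) :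
    ∃ h ∈ S, ∃ u u₂ : V, h = s(u,u₂) ∧ (graphOf (A \ S)).Reachable x u ∧
      ¬ (graphOf (A.erase h)).Reachable x r := by
  obtain ⟨w⟩ := hr
  exact first_sep_aux hT w.toPath.1 w.toPath.2 hnr

end Sep

/-! ### Side confinement lemmas -/

section Confine

open SimpleGraph

set_option linter.unusedSectionVars false
set_option linter.unusedVariables false

variable {A F : Finset (Sym2 V)}

/-- Two vertices of the same `A∖S`-component are not separated by an edge whose
endpoints lie outside that component. -/
lemma comp_confine {S : Finset (Sym2 V)} {x d₁ d₂ y y₂ : V}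
    (h1 : (graphOf (A \ S)).Reachable d₁ x) (h2 : (graphOf (A \ S)).Reachable d₂ x)
    (hy : ¬ (graphOf (A \ S)).Reachable y x) (hy₂ : ¬ (graphOf (A \ S)).Reachable y₂ x) :
    (graphOf (A.erase s(y,y₂))).Reachable d₁ d₂ := by
  have h12 : (graphOf (A \ S)).Reachable d₁ d₂ := h1.trans h2.symm
  have hsub : (A \ S).erase s(y,y₂) ⊆ A.erase s(y,y₂) :=
    Finset.erase_subset_erase _ Finset.sdiff_subset
  rcases reach_split (a := y) (b := y₂) h12 with h | ⟨h, _⟩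
  · exact reach_mono hsub h
  · exfalso
    rcases h with h | h
    · exact hy ((reach_mono (Finset.erase_subset _ _) h).symm.trans h1)
    · exact hy₂ ((reach_mono (Finset.erase_subset _ _) h).symm.trans h1)

/-- A vertex cannot lie beyond two different edges that both touch the component of `x`. -/
lemma far_disjoint (hT : IsTreeSol A) {h₁ h₂ : Sym2 V} {w₁ v₁ w₂ v₂ x t : V}
    (hh₁ : h₁ ∈ A) (hh₂ : h₂ ∈ A) (hne : h₁ ≠ h₂)
    (h₁eq : h₁ = s(w₁,v₁)) (h₂eq : h₂ = s(w₂,v₂))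
    (hxw₁ : (graphOf (A \ {h₁,h₂})).Reachable x w₁)
    (hxw₂ : (graphOf (A \ {h₁,h₂})).Reachable x w₂)
    (ht₁ : ¬ (graphOf (A.erase h₁)).Reachable t x)
    (ht₂ : ¬ (graphOf (A.erase h₂)).Reachable t x)
    (hts : t ∈ supp A) : False := by
  have hw₁v₁ : w₁ ≠ v₁ := edge_nondiag hT (h₁eq ▸ hh₁)
  have hw₂v₂ : w₂ ≠ v₂ := edge_nondiag hT (h₂eq ▸ hh₂)
  have hw₁s : w₁ ∈ supp A := mem_supp_of_edge hh₁ (h₁eq ▸ (by simp))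
  have hw₂s : w₂ ∈ supp A := mem_supp_of_edge hh₂ (h₂eq ▸ (by simp))
  have hxw₁' : (graphOf (A.erase h₁)).Reachable x w₁ :=
    reach_mono (sdiff_pair_subset_left A h₁ h₂) hxw₁
  have hxw₂' : (graphOf (A.erase h₂)).Reachable x w₂ :=
    reach_mono (sdiff_pair_subset_right A h₁ h₂) hxw₂
  have htv₁ : (graphOf (A.erase h₁)).Reachable t v₁ := by
    rcases h₁eq ▸ side_dich hT (h₁eq ▸ hh₁) (supp_reach hT hts hw₁s) with h | h
    · exact absurd (h.trans hxw₁'.symm) ht₁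
    · exact h
  have htv₂ : (graphOf (A.erase h₂)).Reachable t v₂ := by
    rcases h₂eq ▸ side_dich hT (h₂eq ▸ hh₂) (supp_reach hT hts hw₂s) with h | h
    · exact absurd (h.trans hxw₂'.symm) ht₂
    · exact h
  -- split t ~ v₂ (avoiding h₂) at h₁
  have hsplit := reach_split (a := w₁) (b := v₁) htv₂
  rw [← h₁eq, erase_erase_pair A h₁ h₂] at hsplit
  have hcase : (graphOf (A \ {h₁,h₂})).Reachable t v₂ ∨
      (graphOf (A \ {h₁,h₂})).Reachable t v₁ := by
    rcases hsplit with h | ⟨h, _⟩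
    · exact Or.inl h
    · rcases h with h | h
      · exact absurd ((reach_mono (sdiff_pair_subset_left A h₁ h₂) h).trans
          hxw₁'.symm) ht₁
      · exact Or.inr h
  have hh₂e : h₂ ∈ A.erase h₁ := Finset.mem_erase.mpr ⟨Ne.symm hne, hh₂⟩
  have hh₁e : h₁ ∈ A.erase h₂ := Finset.mem_erase.mpr ⟨hne, hh₁⟩
  rcases hcase with h | h
  · -- v₁ ~ v₂ and w₁ ~ w₂ in A.erase h₁ : contradiction with h₁
    have hv12 : (graphOf (A.erase h₁)).Reachable v₁ v₂ :=
      htv₁.symm.trans (reach_mono (sdiff_pair_subset_left A h₁ h₂) h)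
    have hchain : (graphOf (A.erase h₁)).Reachable w₁ v₁ :=
      (hxw₁'.symm.trans (reach_mono (sdiff_pair_subset_left A h₁ h₂) hxw₂)).trans
        ((reach_of_edge (h₂eq ▸ hh₂e) hw₂v₂).trans hv12.symm)
    exact tree_sep hT (h₁eq ▸ hh₁) hw₁v₁ (h₁eq ▸ hchain)
  · have hv12 : (graphOf (A.erase h₂)).Reachable v₁ v₂ :=
      (reach_mono (sdiff_pair_subset_right A h₁ h₂) h).symm.trans htv₂
    have hchain : (graphOf (A.erase h₂)).Reachable w₂ v₂ :=
      (hxw₂'.symm.trans (reach_mono (sdiff_pair_subset_right A h₁ h₂) hxw₁)).trans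
        ((reach_of_edge (h₁eq ▸ hh₁e) hw₁v₁).trans hv12)
    exact tree_sep hT (h₂eq ▸ hh₂) hw₂v₂ (h₂eq ▸ hchain)

/-- A vertex beyond an edge `m` touching the component of `x` lies on the same side of
any other edge `e'` (whose endpoints reach `x` avoiding `m`) as `m`'s near endpoint. -/
lemma far_to_W_side (hT : IsTreeSol A) {m e' : Sym2 V} {w v x x₁ x₂ d : V}
    (hm : m ∈ A) (hmeq : m = s(w,v)) (hme' : m ≠ e') (he' : e' ∈ A)
    (he'eq : e' = s(x₁,x₂))
    (hxw : (graphOf (A.erase m)).Reachable x w)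
    (hx₁ : (graphOf (A.erase m)).Reachable x₁ x)
    (hx₂ : (graphOf (A.erase m)).Reachable x₂ x)
    (hd : ¬ (graphOf (A.erase m)).Reachable d x)
    (hds : d ∈ supp A) :
    (graphOf (A.erase e')).Reachable d w := by
  have hwv : w ≠ v := edge_nondiag hT (hmeq ▸ hm)
  have hws : w ∈ supp A := mem_supp_of_edge hm (hmeq ▸ (by simp))
  have hdv : (graphOf (A.erase m)).Reachable d v := by
    rcases hmeq ▸ side_dich hT (hmeq ▸ hm) (supp_reach hT hds hws) with h | h
    · exact absurd (h.trans hxw.symm) hd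
    · exact h
  have hsplit := reach_split (a := x₁) (b := x₂) hdv
  rw [← he'eq, erase_erase_pair A e' m] at hsplit
  have hDe : A \ {e', m} ⊆ A.erase e' := sdiff_pair_subset_left A e' m
  have hDm : A \ {e', m} ⊆ A.erase m := sdiff_pair_subset_right A e' m
  rcases hsplit with h | ⟨h, _⟩
  · have hmE : m ∈ A.erase e' := Finset.mem_erase.mpr ⟨hme', hm⟩
    exact (reach_mono hDe h).trans (reach_of_edge (hmeq ▸ hmE) hwv).symm
  · exfalso
    rcases h with h | h
    · exact hd ((reach_mono hDm h).trans hx₁)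
    · exact hd ((reach_mono hDm h).trans hx₂)

end Confine

/-! ### No F-edge leaves an inner component -/

section NoLeave

open SimpleGraph

set_option linter.unusedSectionVars false
set_option linter.unusedVariables false

variable {A F : Finset (Sym2 V)}

lemma sdiff_cls_subset {S : Finset (Sym2 V)} {e k : Sym2 V} (he : e ∈ S) (hk : k ∈ S) :
    A \ S ⊆ A \ {e, k} :=
  Finset.sdiff_subset_sdiff (Finset.Subset.refl A)
    (Finset.insert_subset_iff.mpr ⟨he, Finset.singleton_subset_iff.mpr hk⟩)

/-- If an F-edge crosses the cut of some class edge and one endpoint lies in a component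
of `A ∖ S` touched by the class edge `k ≠ e₀`, plus an endpoint of `e₀` also touches that
component, we get a contradiction. -/
lemma no_leave_inner (hT : IsTreeSol A) (hsupp : supp A = supp F)
    {e₀ : Sym2 V} (he₀ : e₀ ∈ A)
    {f g : Sym2 V} (hf : f ∈ cls A F e₀) (hg : g ∈ cls A F e₀) (hfg : f ≠ g)
    {u_f u_g x₀ : V} (huf : u_f ∈ f) (hug : u_g ∈ g)
    (hfW : (graphOf (A \ cls A F e₀)).Reachable u_f x₀)
    (hgW : (graphOf (A \ cls A F e₀)).Reachable u_g x₀)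
    {p q : V} (hpF : s(p,q) ∈ F)
    (hpW : (graphOf (A \ cls A F e₀)).Reachable p x₀)
    (hqW : ¬ (graphOf (A \ cls A F e₀)).Reachable q x₀) : False := by
  have he₀S : e₀ ∈ cls A F e₀ := self_mem_cls he₀
  obtain ⟨hps, hqs⟩ := supp_of_F_edge hsupp hpF
  have hpq : ¬ (graphOf (A \ cls A F e₀)).Reachable p q := by
    intro h
    exact hqW (h.symm.trans hpW)
  obtain ⟨h, hhS, u, u₂, hueq, hpu, hsep⟩ :=
    first_sep hT (supp_reach hT hps hqs) hpq
  -- case B helper : e₀ touches the component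
  have caseB : ∀ k ∈ cls A F e₀, k ≠ e₀ → ∀ u_k ∈ k,
      (graphOf (A \ cls A F e₀)).Reachable u_k x₀ →
      ∀ z ∈ e₀, (graphOf (A \ cls A F e₀)).Reachable z x₀ → False := by
    intro k hk hkne u_k huk hukW z hz hzW
    have hmono := sdiff_cls_subset (A := A) he₀S hk
    have hpmid : p ∈ midComp A e₀ k :=
      mem_mid hz huk (reach_mono hmono (hzW.trans hukW.symm))
        (reach_mono hmono (hzW.trans hpW.symm))
    exact (cross_mid hT hsupp he₀ hhS hk hkne hpF hsep).1 hpmid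
  by_cases hfe : f = e₀
  · have hgne : g ≠ e₀ := fun hh => hfg (hfe.trans hh.symm)
    exact caseB g hg hgne u_g hug hgW u_f (hfe ▸ huf) hfW
  by_cases hge : g = e₀
  · exact caseB f hf hfe u_f huf hfW u_g (hge ▸ hug) hgW
  -- main case : f ≠ e₀ ≠ g
  have hfA : f ∈ A := (mem_cls_iff.mp hf).1
  have hgA : g ∈ A := (mem_cls_iff.mp hg).1
  obtain ⟨a, b, c, d, he₀q, hfq, hbc, hiff_f⟩ := mid_orient hT he₀ hfA (Ne.symm hfe)
  obtain ⟨a', b', c', d', he₀q', hgq, hb'c', hiff_g⟩ := mid_orient hT he₀ hgA (Ne.symm hge)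
  have hmono_f := sdiff_cls_subset (A := A) he₀S hf
  have hmono_g := sdiff_cls_subset (A := A) he₀S hg
  have hpmid_f := (cross_mid hT hsupp he₀ hhS hf hfe hpF hsep).1
  have hpmid_g := (cross_mid hT hsupp he₀ hhS hg hge hpF hsep).1
  have hcd : c ≠ d := edge_nondiag hT (hfq ▸ hfA)
  have hc'd' : c' ≠ d' := edge_nondiag hT (hgq ▸ hgA)
  -- the W-endpoint of f must be the far endpoint d
  have hdW : (graphOf (A \ cls A F e₀)).Reachable d x₀ := by
    have hmem : u_f = c ∨ u_f = d := by
      have := hfq ▸ huf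
      rwa [Sym2.mem_iff] at this
    rcases hmem with rfl | rfl
    · exfalso
      apply hpmid_f
      rw [hiff_f]
      exact hbc.trans (reach_mono hmono_f (hfW.trans hpW.symm))
    · exact hfW
  have hd'W : (graphOf (A \ cls A F e₀)).Reachable d' x₀ := by
    have hmem : u_g = c' ∨ u_g = d' := by
      have := hgq ▸ hug
      rwa [Sym2.mem_iff] at this
    rcases hmem with rfl | rfl
    · exfalso
      apply hpmid_g
      rw [hiff_g]
      exact hb'c'.trans (reach_mono hmono_g (hgW.trans hpW.symm))
    · exact hgW
  -- punchline : split b ~ c at g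
  have hsplit := reach_split (a := c') (b := d') hbc
  rw [← hgq] at hsplit
  have hEg : ((A \ {e₀, f}).erase g) ⊆ A.erase g :=
    Finset.erase_subset_erase g Finset.sdiff_subset
  have hED : ((A \ {e₀, f}).erase g) ⊆ A \ {e₀, f} := Finset.erase_subset _ _
  have hfg_e : f ∈ A.erase g := Finset.mem_erase.mpr ⟨hfg, hfA⟩
  have he₀g_e : e₀ ∈ A.erase g := Finset.mem_erase.mpr ⟨Ne.symm hge, he₀⟩
  have hcd_g : (graphOf (A.erase g)).Reachable c d := reach_of_edge (hfq ▸ hfg_e) hcd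
  have hdd'_g : (graphOf (A.erase g)).Reachable d d' :=
    reach_mono (sdiff_subset_erase hg) (hdW.trans hd'W.symm)
  have hb'c'_g : (graphOf (A.erase g)).Reachable b' c' :=
    reach_mono (sdiff_pair_subset_right A e₀ g) hb'c'
  have hab_g : (graphOf (A.erase g)).Reachable a b :=
    reach_of_edge (he₀q ▸ he₀g_e) (edge_nondiag hT (he₀q ▸ he₀))
  have hbb'_g : (graphOf (A.erase g)).Reachable b b' := by
    have hb'mem : b' ∈ e₀ := he₀q' ▸ (by simp)
    rw [he₀q, Sym2.mem_iff] at hb'mem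
    rcases hb'mem with rfl | rfl
    · exact hab_g.symm
    · exact Reachable.refl _
  rcases hsplit with h | ⟨_, h⟩
  · have h1 : (graphOf (A.erase g)).Reachable b c := reach_mono hEg h
    have chain : (graphOf (A.erase g)).Reachable c' d' :=
      hb'c'_g.symm.trans (hbb'_g.symm.trans (h1.trans (hcd_g.trans hdd'_g)))
    exact tree_sep hT (hgq ▸ hgA) hc'd' (hgq ▸ chain)
  · rcases h with h | h
    · have h1 : (graphOf (A.erase g)).Reachable c c' := reach_mono hEg h
      have chain : (graphOf (A.erase g)).Reachable c' d' :=
        h1.symm.trans (hcd_g.trans hdd'_g)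
      exact tree_sep hT (hgq ▸ hgA) hc'd' (hgq ▸ chain)
    · have h1 : (graphOf (A \ {e₀, f})).Reachable c d' := reach_mono hED h
      have h2 : (graphOf (A \ {e₀, f})).Reachable d' d :=
        reach_mono hmono_f (hd'W.trans hdW.symm)
      have chain : (graphOf (A.erase f)).Reachable c d :=
        reach_mono (sdiff_pair_subset_right A e₀ f) (h1.trans h2)
      exact tree_sep hT (hfq ▸ hfA) hcd (hfq ▸ chain)

end NoLeave

/-! ### Transitivity of compatibility and disjointness of classes -/

section Trans

open SimpleGraph

set_option linter.unusedSectionVars false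
set_option linter.unusedVariables false

variable {A F : Finset (Sym2 V)}

lemma compat_trans (hT : IsTreeSol A) (hsupp : supp A = supp F)
    {ea eb ec : Sym2 V} (haA : ea ∈ A) (hbA : eb ∈ A) (hcA : ec ∈ A)
    (h1 : Compatible A F ea eb) (h2 : Compatible A F eb ec) :
    Compatible A F ea ec := by
  by_cases hac : ea = ec
  · exact Or.inl hac
  by_cases hab : ea = eb
  · exact hab ▸ h2
  by_cases hbc : eb = ec
  · exact hbc ▸ h1
  right
  rintro ⟨J, hJ, p, q, hJeq, hpT, hqT⟩
  subst hJeq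
  obtain ⟨hps, hqs⟩ := supp_of_F_edge hsupp hJ
  obtain ⟨α, β, γ, δ, heaq, hecq, hβγ, hiff⟩ := mid_orient hT haA hcA hac
  have hαβ : α ≠ β := edge_nondiag hT (heaq ▸ haA)
  have hγδ : γ ≠ δ := edge_nondiag hT (hecq ▸ hcA)
  have hαs : α ∈ supp A := mem_supp_of_edge haA (heaq ▸ (by simp))
  have hp : (graphOf (A \ {ea, ec})).Reachable β p := (hiff p).mp hpT
  have hq : ¬ (graphOf (A \ {ea, ec})).Reachable β q := fun h => hqT ((hiff q).mpr h)
  have hDa : A \ {ea, ec} ⊆ A.erase ea := sdiff_pair_subset_left A ea ec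
  have hDc : A \ {ea, ec} ⊆ A.erase ec := sdiff_pair_subset_right A ea ec
  have heaEc : ea ∈ A.erase ec := Finset.mem_erase.mpr ⟨hac, haA⟩
  have hecEa : ec ∈ A.erase ea := Finset.mem_erase.mpr ⟨Ne.symm hac, hcA⟩
  -- position of q : beyond `ea` or beyond `ec`
  have hqpos : (graphOf (A \ {ea, ec})).Reachable q α ∨
      (graphOf (A \ {ea, ec})).Reachable q δ := by
    have hdich := side_dich hT (heaq ▸ haA) (supp_reach hT hqs hαs)
    rw [← heaq] at hdich
    rcases hdich with h | h
    · have hs := reach_split (a := γ) (b := δ) h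
      rw [← hecq, ← sdiff_pair A ea ec] at hs
      rcases hs with hs | ⟨hs, _⟩
      · exact Or.inl hs
      · rcases hs with hs | hs
        · exact absurd (hβγ.trans hs.symm) hq
        · exact Or.inr hs
    · have hs := reach_split (a := γ) (b := δ) h
      rw [← hecq, ← sdiff_pair A ea ec] at hs
      rcases hs with hs | ⟨hs, _⟩
      · exact absurd hs.symm hq
      · rcases hs with hs | hs
        · exact absurd (hβγ.trans hs.symm) hq
        · exact Or.inr hs
  rcases hqpos with hqα | hqδ
  · -- q beyond ea : separation at ea, transfer to eb then ec, contradiction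
    have hsepa : ¬ (graphOf (A.erase ea)).Reachable p q := by
      intro h
      have chain : (graphOf (A.erase ea)).Reachable β α :=
        ((reach_mono hDa hp).trans h).trans (reach_mono hDa hqα)
      exact tree_sep hT (heaq ▸ haA) hαβ (heaq ▸ chain.symm)
    have hsepb := (cross_transfer hT haA hbA hab h1 hJ hps hqs hsepa).1
    have hsepc := (cross_transfer hT hbA hcA hbc h2 hJ hps hqs hsepb).1
    have hpβ : (graphOf (A.erase ec)).Reachable p β := (reach_mono hDc hp).symm
    have hβα : (graphOf (A.erase ec)).Reachable β α :=
      (reach_of_edge (heaq ▸ heaEc) hαβ).symm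
    have hαq : (graphOf (A.erase ec)).Reachable α q := (reach_mono hDc hqα).symm
    exact hsepc (hpβ.trans (hβα.trans hαq))
  · -- q beyond ec : separation at ec, transfer to eb then ea, contradiction
    have hsepc : ¬ (graphOf (A.erase ec)).Reachable p q := by
      intro h
      have chain : (graphOf (A.erase ec)).Reachable γ δ :=
        (reach_mono hDc hβγ).symm.trans
          ((reach_mono hDc hp).trans (h.trans (reach_mono hDc hqδ)))
      exact tree_sep hT (hecq ▸ hcA) hγδ (hecq ▸ chain)
    have hsepb := (cross_transfer hT hcA hbA (Ne.symm hbc) (compat_symm h2) hJ hps hqs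
      (fun h => hsepc h)).1
    have hsepa := (cross_transfer hT hbA haA (Ne.symm hab) (compat_symm h1) hJ hps hqs
      hsepb).1
    have hpβ : (graphOf (A.erase ea)).Reachable p β := (reach_mono hDa hp).symm
    have hβγ' : (graphOf (A.erase ea)).Reachable β γ := reach_mono hDa hβγ
    have hγδ' : (graphOf (A.erase ea)).Reachable γ δ :=
      reach_of_edge (hecq ▸ hecEa) hγδ
    have hδq : (graphOf (A.erase ea)).Reachable δ q := (reach_mono hDa hqδ).symm
    exact hsepa (hpβ.trans (hβγ'.trans (hγδ'.trans hδq)))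

/-- Distinct classes (as classes) are disjoint. -/
lemma cls_eq_of_common (hT : IsTreeSol A) (hsupp : supp A = supp F)
    {e₀ e₀' z : Sym2 V} (he₀ : e₀ ∈ A) (he₀' : e₀' ∈ A)
    (hz : z ∈ cls A F e₀) (hz' : z ∈ cls A F e₀') :
    cls A F e₀ = cls A F e₀' := by
  have hzA : z ∈ A := (mem_cls_iff.mp hz).1
  have h1 : Compatible A F e₀ z := (mem_cls_iff.mp hz).2
  have h1' : Compatible A F e₀' z := (mem_cls_iff.mp hz').2
  have he₀e₀' : Compatible A F e₀ e₀' :=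
    compat_trans hT hsupp he₀ hzA he₀' h1 (compat_symm h1')
  ext w
  rw [mem_cls_iff, mem_cls_iff]
  constructor
  · rintro ⟨hwA, hw⟩
    exact ⟨hwA, compat_trans hT hsupp he₀' he₀ hwA (compat_symm he₀e₀') hw⟩
  · rintro ⟨hwA, hw⟩
    exact ⟨hwA, compat_trans hT hsupp he₀ he₀' hwA he₀e₀' hw⟩

lemma cls_disjoint (hT : IsTreeSol A) (hsupp : supp A = supp F)
    {e₀ e₀' : Sym2 V} (he₀ : e₀ ∈ A) (he₀' : e₀' ∈ A)
    (hne : cls A F e₀ ≠ cls A F e₀') {z : Sym2 V}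
    (hz : z ∈ cls A F e₀) (hz' : z ∈ cls A F e₀') : False :=
  hne (cls_eq_of_common hT hsupp he₀ he₀' hz hz')

end Trans

/-! ### Main argument -/

section Main

open SimpleGraph

set_option linter.unusedSectionVars false
set_option linter.unusedVariables false

variable {A F : Finset (Sym2 V)}

lemma supp_of_reach_le {X : Finset (Sym2 V)} (hXA : X ⊆ A) {u v : V}
    (hu : u ∈ supp A) (h : (graphOf X).Reachable u v) : v ∈ supp A := by
  obtain ⟨w⟩ := h.symm
  cases w with
  | nil => exact hu
  | cons hadj _ => exact ⟨_, hXA hadj.2, by simp⟩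

lemma main_step (hT : IsTreeSol A) (hsupp : supp A = supp F)
    {e₀ e₀' : Sym2 V} (he₀ : e₀ ∈ A) (he₀' : e₀' ∈ A)
    (hSu' : cls A F e₀' ≠ unsafeCls A F)
    (hne : cls A F e₀ ≠ cls A F e₀')
    {f g : Sym2 V} (hf : f ∈ cls A F e₀) (hg : g ∈ cls A F e₀) (hfg : f ≠ g)
    {u_f u_g x : V} (huf : u_f ∈ f) (hug : u_g ∈ g)
    (hfW : (graphOf (A \ cls A F e₀)).Reachable u_f x)
    (hgW : (graphOf (A \ cls A F e₀)).Reachable u_g x)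
    {e' : Sym2 V} (he' : e' ∈ cls A F e₀') {x₁ x₂ : V} (he'eq : e' = s(x₁,x₂))
    (hx₁W : (graphOf (A \ cls A F e₀)).Reachable x₁ x)
    (hx₂W : (graphOf (A \ cls A F e₀)).Reachable x₂ x)
    {e'' : Sym2 V} (he'' : e'' ∈ cls A F e₀') {y y₂ : V} (he''eq : e'' = s(y,y₂))
    (hyW : ¬ (graphOf (A \ cls A F e₀)).Reachable y x)
    (hy₂W : ¬ (graphOf (A \ cls A F e₀)).Reachable y₂ x) : False := by
  have he'A : e' ∈ A := (mem_cls_iff.mp he').1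
  have he''A : e'' ∈ A := (mem_cls_iff.mp he'').1
  have hx₁s : x₁ ∈ supp A := mem_supp_of_edge he'A (he'eq ▸ (by simp))
  have hxs : x ∈ supp A := supp_of_reach_le Finset.sdiff_subset hx₁s hx₁W
  -- e' is safe, K := s(r,t) crosses its cut
  have hsafe' : Safe A F e₀' := safe_of_cls_ne hT hsupp he₀' hSu'
  obtain ⟨J, hJ, r, t, rfl, hrt, hsepE'⟩ := safe_of_mem_cls hT hsupp he₀' hsafe' he'
  obtain ⟨hrs, hts⟩ := supp_of_F_edge hsupp hJ
  have hsepE'' : ¬ (graphOf (A.erase e'')).Reachable r t :=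
    cross_all hT hsupp he₀' he' he'' hJ hsepE'
  have hdisjS : ∀ z, z ∈ cls A F e₀ → z ∈ cls A F e₀' → False :=
    fun z hz hz' => cls_disjoint hT hsupp he₀ he₀' hne hz hz'
  have he'S : e' ∉ cls A F e₀ := fun h => hdisjS e' h he'
  by_cases hrW : (graphOf (A \ cls A F e₀)).Reachable r x
  · by_cases htW : (graphOf (A \ cls A F e₀)).Reachable t x
    · -- both endpoints in W
      have := comp_confine (A := A) (S := cls A F e₀) hrW htW hyW hy₂W
      rw [← he''eq] at this
      exact hsepE'' this
    · exact no_leave_inner hT hsupp he₀ hf hg hfg huf hug hfW hgW hJ hrW htW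
  · by_cases htW : (graphOf (A \ cls A F e₀)).Reachable t x
    · exact no_leave_inner hT hsupp he₀ hf hg hfg huf hug hfW hgW
        (by rwa [Sym2.eq_swap]) htW hrW
    -- both endpoints outside W
    obtain ⟨h₁, h₁S, w₁, v₁, h₁eq, hxw₁, hsep₁⟩ :=
      first_sep hT (supp_reach hT hxs hrs) (fun h => hrW h.symm)
    obtain ⟨h₂, h₂S, w₂, v₂, h₂eq, hxw₂, hsep₂⟩ :=
      first_sep hT (supp_reach hT hxs hts) (fun h => htW h.symm)
    have h₁A : h₁ ∈ A := (mem_cls_iff.mp h₁S).1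
    have h₂A : h₂ ∈ A := (mem_cls_iff.mp h₂S).1
    have h₁e' : h₁ ≠ e' := fun hh => hdisjS e' (hh ▸ h₁S) he'
    have h₂e' : h₂ ≠ e' := fun hh => hdisjS e' (hh ▸ h₂S) he'
    have hru : (graphOf (A.erase e')).Reachable r w₁ :=
      far_to_W_side hT h₁A h₁eq h₁e' he'A he'eq
        (reach_mono (sdiff_subset_erase h₁S) hxw₁)
        (reach_mono (sdiff_subset_erase h₁S) hx₁W)
        (reach_mono (sdiff_subset_erase h₁S) hx₂W)
        (fun h => hsep₁ h.symm) hrs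
    by_cases h₁₂ : h₁ = h₂
    · -- both beyond the same edge : same side of e'
      rw [← h₁₂] at hsep₂
      have htu : (graphOf (A.erase e')).Reachable t w₁ :=
        far_to_W_side hT h₁A h₁eq h₁e' he'A he'eq
          (reach_mono (sdiff_subset_erase h₁S) hxw₁)
          (reach_mono (sdiff_subset_erase h₁S) hx₁W)
          (reach_mono (sdiff_subset_erase h₁S) hx₂W)
          (fun h => hsep₂ h.symm) hts
      exact hsepE' (hru.trans htu.symm)
    have htu : (graphOf (A.erase e')).Reachable t w₂ :=
      far_to_W_side hT h₂A h₂eq h₂e' he'A he'eq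
        (reach_mono (sdiff_subset_erase h₂S) hxw₂)
        (reach_mono (sdiff_subset_erase h₂S) hx₁W)
        (reach_mono (sdiff_subset_erase h₂S) hx₂W)
        (fun h => hsep₂ h.symm) hts
    have hw₁₂ : ¬ (graphOf (A.erase e')).Reachable w₁ w₂ :=
      fun h => hsepE' (hru.trans (h.trans htu.symm))
    -- incompatibility witness for (e₀, e')
    have hncompat : ¬ Compatible A F e₀ e' :=
      fun hc => he'S (mem_cls_iff.mpr ⟨he'A, hc⟩)
    have he₀e' : e₀ ≠ e' := fun hh => he'S (hh ▸ self_mem_cls he₀)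
    have hleaves : leavesSet F (midComp A e₀ e') := by
      by_contra hl
      exact hncompat (Or.inr hl)
    obtain ⟨Jd, hJd, d₁, d₂, rfl, hd₁T, hd₂T⟩ := hleaves
    obtain ⟨hd₁s, hd₂s⟩ := supp_of_F_edge hsupp hJd
    obtain ⟨a₀, b₀, c₀, d₀, he₀q, he'q, hb₀c₀, hiff₀⟩ := mid_orient hT he₀ he'A he₀e'
    have ha₀b₀ : a₀ ≠ b₀ := edge_nondiag hT (he₀q ▸ he₀)
    have hc₀d₀ : c₀ ≠ d₀ := edge_nondiag hT (he'q ▸ he'A)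
    have ha₀s : a₀ ∈ supp A := mem_supp_of_edge he₀ (he₀q ▸ (by simp))
    have hD₀a : A \ {e₀, e'} ⊆ A.erase e₀ := sdiff_pair_subset_left A e₀ e'
    have hD₀c : A \ {e₀, e'} ⊆ A.erase e' := sdiff_pair_subset_right A e₀ e'
    have he₀Ee' : e₀ ∈ A.erase e' := Finset.mem_erase.mpr ⟨he₀e', he₀⟩
    have he'Ee₀ : e' ∈ A.erase e₀ := Finset.mem_erase.mpr ⟨Ne.symm he₀e', he'A⟩
    -- W-facts for both endpoints of e'
    have hc₀W : (graphOf (A \ cls A F e₀)).Reachable c₀ x := by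
      have hm : c₀ ∈ e' := he'q ▸ (by simp)
      rw [he'eq, Sym2.mem_iff] at hm
      rcases hm with rfl | rfl
      · exact hx₁W
      · exact hx₂W
    have hd₀W : (graphOf (A \ cls A F e₀)).Reachable d₀ x := by
      have hm : d₀ ∈ e' := he'q ▸ (by simp)
      rw [he'eq, Sym2.mem_iff] at hm
      rcases hm with rfl | rfl
      · exact hx₁W
      · exact hx₂W
    have hd₁midR : (graphOf (A \ {e₀, e'})).Reachable b₀ d₁ := (hiff₀ d₁).mp hd₁T
    -- position of d₂ : beyond e₀ or beyond e'
    have hd₂pos : (graphOf (A \ {e₀, e'})).Reachable d₂ a₀ ∨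
        (graphOf (A \ {e₀, e'})).Reachable d₂ d₀ := by
      have hdich := side_dich hT (he₀q ▸ he₀) (supp_reach hT hd₂s ha₀s)
      rw [← he₀q] at hdich
      have hqmid : ∀ hh : (graphOf (A \ {e₀, e'})).Reachable b₀ d₂, False :=
        fun hh => hd₂T ((hiff₀ d₂).mpr hh)
      rcases hdich with h | h
      · have hs := reach_split (a := c₀) (b := d₀) h
        rw [← he'q, ← sdiff_pair A e₀ e'] at hs
        rcases hs with hs | ⟨hs, _⟩
        · exact Or.inl hs
        · rcases hs with hs | hs
          · exact absurd (hb₀c₀.trans hs.symm) (fun hh => hqmid hh)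
          · exact Or.inr hs
      · have hs := reach_split (a := c₀) (b := d₀) h
        rw [← he'q, ← sdiff_pair A e₀ e'] at hs
        rcases hs with hs | ⟨hs, _⟩
        · exact absurd hs.symm hqmid
        · rcases hs with hs | hs
          · exact absurd (hb₀c₀.trans hs.symm) (fun hh => hqmid hh)
          · exact Or.inr hs
    -- the two separations
    have hsep_e₀_of : (graphOf (A \ {e₀, e'})).Reachable d₂ a₀ →
        ¬ (graphOf (A.erase e₀)).Reachable d₁ d₂ := by
      intro hp2 h
      have chain : (graphOf (A.erase e₀)).Reachable b₀ a₀ :=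
        ((reach_mono hD₀a hd₁midR).trans h).trans (reach_mono hD₀a hp2)
      exact tree_sep hT (he₀q ▸ he₀) ha₀b₀ (he₀q ▸ chain.symm)
    have hsep_e'_of : (graphOf (A \ {e₀, e'})).Reachable d₂ d₀ →
        ¬ (graphOf (A.erase e')).Reachable d₁ d₂ := by
      intro hp2 h
      have chain : (graphOf (A.erase e')).Reachable c₀ d₀ :=
        (reach_mono hD₀c hb₀c₀).symm.trans
          ((reach_mono hD₀c hd₁midR).trans (h.trans (reach_mono hD₀c hp2)))
      exact tree_sep hT (he'q ▸ he'A) hc₀d₀ (he'q ▸ chain)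
    -- d₁ and d₂ are not in W
    have hbothW : ¬ ((graphOf (A \ cls A F e₀)).Reachable d₁ x ∧
        (graphOf (A \ cls A F e₀)).Reachable d₂ x) := by
      rintro ⟨k1, k2⟩
      rcases hd₂pos with hp2 | hp2
      · have hseph₁ := cross_all hT hsupp he₀ (self_mem_cls he₀) h₁S hJd
          (hsep_e₀_of hp2)
        exact hseph₁ ((reach_mono (sdiff_subset_erase h₁S) k1).trans
          (reach_mono (sdiff_subset_erase h₁S) k2).symm)
      · have hsepe'' := cross_all hT hsupp he₀' he' he'' hJd (hsep_e'_of hp2)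
        have := comp_confine (A := A) (S := cls A F e₀) k1 k2 hyW hy₂W
        rw [← he''eq] at this
        exact hsepe'' this
    by_cases hd₁W : (graphOf (A \ cls A F e₀)).Reachable d₁ x
    · by_cases hd₂W : (graphOf (A \ cls A F e₀)).Reachable d₂ x
      · exact hbothW ⟨hd₁W, hd₂W⟩
      · exact no_leave_inner hT hsupp he₀ hf hg hfg huf hug hfW hgW hJd hd₁W hd₂W
    by_cases hd₂W : (graphOf (A \ cls A F e₀)).Reachable d₂ x
    · exact no_leave_inner hT hsupp he₀ hf hg hfg huf hug hfW hgW
        (by rwa [Sym2.eq_swap]) hd₂W hd₁W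
    -- both d₁, d₂ outside W
    obtain ⟨m₁, m₁S, wm₁, vm₁, m₁eq, hxwm₁, hsepm₁⟩ :=
      first_sep hT (supp_reach hT hxs hd₁s) (fun h => hd₁W h.symm)
    obtain ⟨m₂, m₂S, wm₂, vm₂, m₂eq, hxwm₂, hsepm₂⟩ :=
      first_sep hT (supp_reach hT hxs hd₂s) (fun h => hd₂W h.symm)
    rcases hd₂pos with hp2 | hp2
    · -- d₂ beyond e₀
      have hsep₀ := hsep_e₀_of hp2
      have hseph₁ := cross_all hT hsupp he₀ (self_mem_cls he₀) h₁S hJd hsep₀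
      have hseph₂ := cross_all hT hsupp he₀ (self_mem_cls he₀) h₂S hJd hsep₀
      -- d₁ ~ d₂ avoiding e'
      have hreach' : (graphOf (A.erase e')).Reachable d₁ d₂ :=
        (reach_mono hD₀c hd₁midR).symm.trans
          ((reach_of_edge (he₀q ▸ he₀Ee') ha₀b₀).symm.trans
            (reach_mono hD₀c hp2).symm)
      -- which endpoint is beyond h₁ / h₂?
      have hbey : ∀ (hh : Sym2 V), hh ∈ cls A F e₀ → ∀ w v : V, hh = s(w,v) →
          (graphOf (A \ cls A F e₀)).Reachable x w →
          ¬ (graphOf (A.erase hh)).Reachable d₁ d₂ →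
          (¬ (graphOf (A.erase hh)).Reachable d₁ x) ∨
          (¬ (graphOf (A.erase hh)).Reachable d₂ x) := by
        intro hh hhS w v hheq hxw hsep
        by_cases hb1 : (graphOf (A.erase hh)).Reachable d₁ x
        · right
          intro hb2
          exact hsep (hb1.trans hb2.symm)
        · exact Or.inl hb1
      have hfar1 := hbey h₁ h₁S w₁ v₁ h₁eq hxw₁ hseph₁
      have hfar2 := hbey h₂ h₂S w₂ v₂ h₂eq hxw₂ hseph₂
      have hxw₁' : (graphOf (A \ {h₁, h₂})).Reachable x w₁ :=
        reach_mono (sdiff_cls_subset h₁S h₂S) hxw₁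
      have hxw₂' : (graphOf (A \ {h₁, h₂})).Reachable x w₂ :=
        reach_mono (sdiff_cls_subset h₁S h₂S) hxw₂
      rcases hfar1 with hf1 | hf1 <;> rcases hfar2 with hf2 | hf2
      · -- d₁ beyond both : impossible
        exact far_disjoint hT h₁A h₂A h₁₂ h₁eq h₂eq hxw₁' hxw₂' hf1 hf2 hd₁s
      · -- d₁ beyond h₁, d₂ beyond h₂
        have hd₁w₁ : (graphOf (A.erase e')).Reachable d₁ w₁ :=
          far_to_W_side hT h₁A h₁eq h₁e' he'A he'eq
            (reach_mono (sdiff_subset_erase h₁S) hxw₁)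
            (reach_mono (sdiff_subset_erase h₁S) hx₁W)
            (reach_mono (sdiff_subset_erase h₁S) hx₂W) hf1 hd₁s
        have hd₂w₂ : (graphOf (A.erase e')).Reachable d₂ w₂ :=
          far_to_W_side hT h₂A h₂eq h₂e' he'A he'eq
            (reach_mono (sdiff_subset_erase h₂S) hxw₂)
            (reach_mono (sdiff_subset_erase h₂S) hx₁W)
            (reach_mono (sdiff_subset_erase h₂S) hx₂W) hf2 hd₂s
        exact hw₁₂ (hd₁w₁.symm.trans (hreach'.trans hd₂w₂))
      · -- d₂ beyond h₁, d₁ beyond h₂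
        have hd₂w₁ : (graphOf (A.erase e')).Reachable d₂ w₁ :=
          far_to_W_side hT h₁A h₁eq h₁e' he'A he'eq
            (reach_mono (sdiff_subset_erase h₁S) hxw₁)
            (reach_mono (sdiff_subset_erase h₁S) hx₁W)
            (reach_mono (sdiff_subset_erase h₁S) hx₂W) hf1 hd₂s
        have hd₁w₂ : (graphOf (A.erase e')).Reachable d₁ w₂ :=
          far_to_W_side hT h₂A h₂eq h₂e' he'A he'eq
            (reach_mono (sdiff_subset_erase h₂S) hxw₂)
            (reach_mono (sdiff_subset_erase h₂S) hx₁W)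
            (reach_mono (sdiff_subset_erase h₂S) hx₂W) hf2 hd₁s
        exact hw₁₂ (hd₂w₁.symm.trans (hreach'.symm.trans hd₁w₂))
      · exact far_disjoint hT h₁A h₂A h₁₂ h₁eq h₂eq hxw₁' hxw₂' hf1 hf2 hd₂s
    · -- d₂ beyond e'
      have hsepe' := hsep_e'_of hp2
      by_cases hm12 : m₁ = m₂
      · rw [← hm12] at hsepm₂
        have hd₁w : (graphOf (A.erase e')).Reachable d₁ wm₁ :=
          far_to_W_side hT ((mem_cls_iff.mp m₁S).1) m₁eq
            (fun hh => hdisjS e' (hh ▸ m₁S) he') he'A he'eq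
            (reach_mono (sdiff_subset_erase m₁S) hxwm₁)
            (reach_mono (sdiff_subset_erase m₁S) hx₁W)
            (reach_mono (sdiff_subset_erase m₁S) hx₂W)
            (fun h => hsepm₁ h.symm) hd₁s
        have hd₂w : (graphOf (A.erase e')).Reachable d₂ wm₁ :=
          far_to_W_side hT ((mem_cls_iff.mp m₁S).1) m₁eq
            (fun hh => hdisjS e' (hh ▸ m₁S) he') he'A he'eq
            (reach_mono (sdiff_subset_erase m₁S) hxwm₁)
            (reach_mono (sdiff_subset_erase m₁S) hx₁W)
            (reach_mono (sdiff_subset_erase m₁S) hx₂W)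
            (fun h => hsepm₂ h.symm) hd₂s
        exact hsepe' (hd₁w.trans hd₂w.symm)
      · -- d₂ is not beyond m₁
        have hd₂m₁ : (graphOf (A.erase m₁)).Reachable d₂ x := by
          by_contra hcon
          exact far_disjoint hT ((mem_cls_iff.mp m₁S).1) ((mem_cls_iff.mp m₂S).1)
            hm12 m₁eq m₂eq
            (reach_mono (sdiff_cls_subset m₁S m₂S) hxwm₁)
            (reach_mono (sdiff_cls_subset m₁S m₂S) hxwm₂)
            hcon (fun h => hsepm₂ h.symm) hd₂s
        have hsepm₁d : ¬ (graphOf (A.erase m₁)).Reachable d₁ d₂ :=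
          fun h => hsepm₁ ((h.trans hd₂m₁).symm)
        have hsep₀ := cross_all hT hsupp he₀ m₁S (self_mem_cls he₀) hJd hsepm₁d
        have hreach₀ : (graphOf (A.erase e₀)).Reachable d₁ d₂ :=
          (reach_mono hD₀a hd₁midR).symm.trans
            ((reach_mono hD₀a hb₀c₀).trans
              ((reach_of_edge (he'q ▸ he'Ee₀) hc₀d₀).trans
                (reach_mono hD₀a hp2).symm))
        exact hsep₀ hreach₀

end Main

theorem stmt12_class_position
    (T : Finset (V × V)) (A F : Finset (Sym2 V))
    (hAfeas : Feasible A T) (hFfeas : Feasible F T)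
    (hAtree : IsTreeSol A) (hsupp : supp A = supp F)
    (e₀ e₀' : Sym2 V) (he₀ : e₀ ∈ A) (he₀' : e₀' ∈ A)
    (hSu : cls A F e₀ ≠ unsafeCls A F) (hSu' : cls A F e₀' ≠ unsafeCls A F)
    (hne : cls A F e₀ ≠ cls A F e₀') :
    Xor'
      (∀ e' ∈ cls A F e₀', ∀ x ∈ e',
        ¬ innerComp A (cls A F e₀) ((graphOf (A \ cls A F e₀)).connectedComponentMk x))
      (∃ c : (graphOf (A \ cls A F e₀)).ConnectedComponent, innerComp A (cls A F e₀) c ∧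
        ∀ e' ∈ cls A F e₀', ∀ x ∈ e',
          (graphOf (A \ cls A F e₀)).connectedComponentMk x = c) := by
  classical
  set P : Prop := (∀ e' ∈ cls A F e₀', ∀ x ∈ e',
      ¬ innerComp A (cls A F e₀) ((graphOf (A \ cls A F e₀)).connectedComponentMk x))
    with hPdef
  by_cases hP : P
  · -- P holds, show ¬Q
    left
    refine ⟨hP, ?_⟩
    rintro ⟨c, hc, hall⟩
    obtain ⟨α, β, he₀'q⟩ := sym2_eq e₀'
    have hmem : α ∈ e₀' := he₀'q ▸ (by simp)
    have h1 := hP e₀' (self_mem_cls he₀') α hmem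
    have h2 := hall e₀' (self_mem_cls he₀') α hmem
    rw [h2] at h1
    exact h1 hc
  · -- ¬P : produce Q
    right
    rw [hPdef] at hP
    push_neg at hP
    obtain ⟨e', he', x, hx, hinner⟩ := hP
    refine ⟨⟨(graphOf (A \ cls A F e₀)).connectedComponentMk x, hinner, ?_⟩, ?_⟩
    · -- all endpoints of class edges lie in this component
      intro e'' he'' y hy
      by_contra hcon
      rw [SimpleGraph.ConnectedComponent.eq] at hcon
      -- unpack the inner component data
      obtain ⟨f, hf, g, hg, hfg, ⟨u_f, huf, hufc⟩, ⟨u_g, hug, hugc⟩⟩ := hinner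
      rw [SimpleGraph.ConnectedComponent.eq] at hufc hugc
      have hdisj : ∀ z, z ∈ cls A F e₀ → z ∈ cls A F e₀' → False :=
        fun z hz hz' => cls_disjoint hAtree hsupp he₀ he₀' hne hz hz'
      have he'A : e' ∈ A := (mem_cls_iff.mp he').1
      have he''A : e'' ∈ A := (mem_cls_iff.mp he'').1
      have he'AS : e' ∈ A \ cls A F e₀ :=
        Finset.mem_sdiff.mpr ⟨he'A, fun h => hdisj e' h he'⟩
      have he''AS : e'' ∈ A \ cls A F e₀ :=
        Finset.mem_sdiff.mpr ⟨he''A, fun h => hdisj e'' h he''⟩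
      obtain ⟨x₁, x₂, he'eq⟩ := sym2_eq e'
      have hx₁₂ : x₁ ≠ x₂ := edge_nondiag hAtree (he'eq ▸ he'A)
      have hedge' : (graphOf (A \ cls A F e₀)).Reachable x₁ x₂ :=
        reach_of_edge (he'eq ▸ he'AS) hx₁₂
      have hxmem : x = x₁ ∨ x = x₂ := by rwa [he'eq, Sym2.mem_iff] at hx
      have hx₁W : (graphOf (A \ cls A F e₀)).Reachable x₁ x := by
        rcases hxmem with rfl | rfl
        · exact SimpleGraph.Reachable.refl _
        · exact hedge'
      have hx₂W : (graphOf (A \ cls A F e₀)).Reachable x₂ x := by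
        rcases hxmem with rfl | rfl
        · exact hedge'.symm
        · exact SimpleGraph.Reachable.refl _
      -- the other endpoint of e''
      obtain ⟨y₁, y₂, he''eq0⟩ := sym2_eq e''
      have hymem : y = y₁ ∨ y = y₂ := by rwa [he''eq0, Sym2.mem_iff] at hy
      have hy₁₂ : y₁ ≠ y₂ := edge_nondiag hAtree (he''eq0 ▸ he''A)
      have hedge'' : (graphOf (A \ cls A F e₀)).Reachable y₁ y₂ :=
        reach_of_edge (he''eq0 ▸ he''AS) hy₁₂
      have hstep : ∀ z z₂ : V, e'' = s(z,z₂) →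
          (graphOf (A \ cls A F e₀)).Reachable z z₂ →
          ¬ (graphOf (A \ cls A F e₀)).Reachable z x → False := by
        intro z z₂ heq hzz hzW
        have hz₂W : ¬ (graphOf (A \ cls A F e₀)).Reachable z₂ x :=
          fun h => hzW (hzz.trans h)
        exact main_step hAtree hsupp he₀ he₀' hSu' hne hf hg hfg huf hug hufc hugc
          he' he'eq hx₁W hx₂W he'' heq hzW hz₂W
      rcases hymem with rfl | rfl
      · exact hstep y y₂ he''eq0 hedge'' hcon
      · exact hstep y y₁ (he''eq0.trans Sym2.eq_swap) hedge''.symm hcon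
    · -- ¬P part of the Xor
      rw [hPdef]
      push_neg
      exact ⟨e', he', x, hx, hinner⟩
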